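/- If t* is a point where sup_t {⟨c,t⟩ − Φ(t)} is attained (so ∇Φ(t*) = c), then the matrix Q(t*)^{-1/2} puts X in radial c-isotropic position: Σ_{i=1}^n c_i ((Q(t*)^{-1/2} x_i)/|Q(t*)^{-1/2} x_i|) ⊗ ((Q(t*)^{-1/2} x_i)/|Q(t*)^{-1/2} x_i|) = I_d. -/

import Mathlib

open Matrix Real Finset

lemma aux_sum_mulVec {d n : ℕ} (M : Fin n → Matrix (Fin d) (Fin d) ℝ) (v : Fin d → ℝ) :
    (∑ i, M i) *ᵥ v = ∑ i, M i *ᵥ v := by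
  ext k
  simp only [Matrix.mulVec, dotProduct, Matrix.sum_apply, Finset.sum_apply, Finset.sum_mul]
  exact Finset.sum_comm

lemma aux_dotProduct_sum {d n : ℕ} (v : Fin d → ℝ) (w : Fin n → Fin d → ℝ) :
    v ⬝ᵥ (∑ i, w i) = ∑ i, v ⬝ᵥ w i := by
  simp only [dotProduct, Finset.sum_apply, Finset.mul_sum]
  exact Finset.sum_comm

lemma aux_vecMulVec_mulVec {d : ℕ} (a b v : Fin d → ℝ) :
    Matrix.vecMulVec a b *ᵥ v = (b ⬝ᵥ v) • a := by
  ext k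
  simp only [Matrix.mulVec, dotProduct, Matrix.vecMulVec_apply, Pi.smul_apply, smul_eq_mul,
    Finset.sum_mul]
  exact Finset.sum_congr rfl (fun i _ => by ring)

lemma aux_posdef {d n : ℕ} (x : Fin n → Fin d → ℝ)
    (hspan : Submodule.span ℝ (Set.range x) = ⊤) (t : Fin n → ℝ) :
    (∑ i, Real.exp (t i) • Matrix.vecMulVec (x i) (x i)).PosDef := by
  rw [Matrix.posDef_iff_dotProduct_mulVec]
  constructor
  · ext i j
    simp [Matrix.sum_apply, Matrix.conjTranspose_apply, Matrix.vecMulVec_apply, mul_comm]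
  · intro v hv
    have hq : star v ⬝ᵥ ((∑ i, Real.exp (t i) • Matrix.vecMulVec (x i) (x i)) *ᵥ v)
        = ∑ i, Real.exp (t i) * ((x i ⬝ᵥ v) * (x i ⬝ᵥ v)) := by
      rw [star_trivial, aux_sum_mulVec, aux_dotProduct_sum]
      congr 1; ext i
      rw [Matrix.smul_mulVec, aux_vecMulVec_mulVec, dotProduct_smul, dotProduct_smul,
        smul_eq_mul, smul_eq_mul]
      congr 1
      simp [dotProduct, mul_comm]
    rw [hq]
    have hex : ∃ i, x i ⬝ᵥ v ≠ 0 := by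
      by_contra h
      push_neg at h
      have hall : ∀ w ∈ Submodule.span ℝ (Set.range x), w ⬝ᵥ v = 0 := by
        intro w hw
        induction hw using Submodule.span_induction with
        | mem w hw => obtain ⟨i, rfl⟩ := hw; exact h i
        | zero => simp
        | add a b _ _ ha hb => rw [add_dotProduct, ha, hb, add_zero]
        | smul r a _ ha => rw [smul_dotProduct, ha, smul_zero]
      have := hall v (by rw [hspan]; trivial)
      exact hv (dotProduct_self_eq_zero.mp this)
    obtain ⟨i0, hi0⟩ := hex
    apply Finset.sum_pos' (fun i _ => mul_nonneg (Real.exp_pos _).le (mul_self_nonneg _))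
    exact ⟨i0, Finset.mem_univ _, mul_pos (Real.exp_pos _) (mul_self_pos.mpr hi0)⟩

lemma aux_det_one {ι : Type*} [Unique ι] (M : Matrix ι ι ℝ) :
    @Matrix.det ι (fun a b => decidableEq_of_subsingleton a b) (Unique.fintype) ℝ _ M
      = M default default := by
  rw [Matrix.det_apply]
  rw [Finset.sum_eq_single_of_mem (1 : Equiv.Perm ι) (Finset.mem_univ _)
    (fun b _ hb => absurd (Subsingleton.elim b 1) hb)]
  simp

lemma aux_det_rank_one {d : ℕ} (Q : Matrix (Fin d) (Fin d) ℝ) (hQ : IsUnit Q.det)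
    (u : Fin d → ℝ) (w : ℝ) :
    (Q + w • Matrix.vecMulVec u u).det = Q.det * (1 + w * (u ⬝ᵥ Q⁻¹ *ᵥ u)) := by
  have h1 : w • Matrix.vecMulVec u u = Matrix.replicateCol (Fin 1) (w • u) * Matrix.replicateRow (Fin 1) u := by
    ext i j
    simp [Matrix.vecMulVec_apply, Matrix.mul_apply, Matrix.replicateCol, Matrix.replicateRow, mul_assoc]
  rw [h1]
  erw [Matrix.det_add_replicateCol_mul_replicateRow (ι := Fin 1) hQ]
  congr 1
  rw [aux_det_one]
  simp only [Matrix.add_apply, Matrix.one_apply_eq]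
  rw [Matrix.mul_assoc, ← Matrix.replicateCol_mulVec, Matrix.replicateRow_mul_replicateCol_apply, Matrix.mulVec_smul,
    dotProduct_smul, smul_eq_mul]

lemma aux_vecMulVec_smul {d : ℕ} (a : ℝ) (u : Fin d → ℝ) :
    Matrix.vecMulVec (a • u) (a • u) = (a * a) • Matrix.vecMulVec u u := by
  ext i j
  simp only [Matrix.vecMulVec_apply, Pi.smul_apply, Matrix.smul_apply, smul_eq_mul]
  ring

lemma aux_vecMulVec_conj {d : ℕ} (B : Matrix (Fin d) (Fin d) ℝ) (u : Fin d → ℝ) :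
    Matrix.vecMulVec (B *ᵥ u) (B *ᵥ u) = B * Matrix.vecMulVec u u * Bᵀ := by
  rw [Matrix.vecMulVec_eq (Fin 1), Matrix.vecMulVec_eq (Fin 1), Matrix.replicateCol_mulVec,
    Matrix.replicateRow_mulVec, Matrix.transpose_mul, Matrix.transpose_replicateCol]
  rw [Matrix.mul_assoc, Matrix.mul_assoc, Matrix.mul_assoc]

/-- If `t*` attains `sup_t (⟨c, t⟩ - Φ(t))`, then `Q(t*)^{-1/2}` (the positive definite
matrix `B` with `B * B = Q(t*)⁻¹`) puts `X` in radial `c`-isotropic position: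
`∑ i, c i • (B x i / |B x i|) ⊗ (B x i / |B x i|) = I_d`. -/
theorem stmt12 {d n : ℕ} (x : Fin n → Fin d → ℝ) (c : Fin n → ℝ)
    (hc : ∀ i, 0 < c i) (hcsum : ∑ i, c i = (d : ℝ))
    (hunit : ∀ i, x i ⬝ᵥ x i = 1)
    (hspan : Submodule.span ℝ (Set.range x) = ⊤)
    (tstar : Fin n → ℝ)
    (hmax : ∀ t : Fin n → ℝ,
      (∑ i, c i * t i) -
          Real.log (∑ i, Real.exp (t i) • Matrix.vecMulVec (x i) (x i)).det
        ≤ (∑ i, c i * tstar i) -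
          Real.log (∑ i, Real.exp (tstar i) • Matrix.vecMulVec (x i) (x i)).det)
    (B : Matrix (Fin d) (Fin d) ℝ) (hB : B.PosDef)
    (hB2 : B * B = (∑ i, Real.exp (tstar i) • Matrix.vecMulVec (x i) (x i))⁻¹) :
    ∑ i, c i • Matrix.vecMulVec
        ((Real.sqrt (B.mulVec (x i) ⬝ᵥ B.mulVec (x i)))⁻¹ • B.mulVec (x i))
        ((Real.sqrt (B.mulVec (x i) ⬝ᵥ B.mulVec (x i)))⁻¹ • B.mulVec (x i)) =
      (1 : Matrix (Fin d) (Fin d) ℝ) := by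
  set Q : Matrix (Fin d) (Fin d) ℝ := ∑ i, Real.exp (tstar i) • Matrix.vecMulVec (x i) (x i)
    with hQdef
  have hQpd : Q.PosDef := aux_posdef x hspan tstar
  have hD : 0 < Q.det := hQpd.det_pos
  have hQu : IsUnit Q.det := hD.ne'.isUnit
  -- Step A: update identity
  have hupd : ∀ (j : Fin n) (s : ℝ),
      (∑ i, Real.exp ((Function.update tstar j s) i) • Matrix.vecMulVec (x i) (x i))
        = Q + (Real.exp s - Real.exp (tstar j)) • Matrix.vecMulVec (x j) (x j) := by
    intro j s
    have h : ∀ i, Real.exp (Function.update tstar j s i) • Matrix.vecMulVec (x i) (x i)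
        = Real.exp (tstar i) • Matrix.vecMulVec (x i) (x i)
          + (if i = j then (Real.exp s - Real.exp (tstar j)) • Matrix.vecMulVec (x j) (x j)
            else 0) := by
      intro i
      by_cases h : i = j
      · subst h
        rw [Function.update_self, if_pos rfl, sub_smul]
        abel
      · rw [Function.update_of_ne h, if_neg h, add_zero]
    simp_rw [h, Finset.sum_add_distrib, Finset.sum_ite_eq' Finset.univ j]
    simp [hQdef]
  -- Step B: gradient identity
  have key : ∀ j, c j = Real.exp (tstar j) * (x j ⬝ᵥ Q⁻¹ *ᵥ x j) := by
    intro j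
    set γ : ℝ := x j ⬝ᵥ Q⁻¹ *ᵥ x j with hγ
    set E : ℝ := Real.exp (tstar j) with hE
    have hdet : ∀ s, (∑ i, Real.exp ((Function.update tstar j s) i)
        • Matrix.vecMulVec (x i) (x i)).det = Q.det * (1 + (Real.exp s - E) * γ) := by
      intro s
      rw [hupd j s, aux_det_rank_one Q hQu]
    have hpos : ∀ s, 0 < 1 + (Real.exp s - E) * γ := by
      intro s
      have h1 := (aux_posdef x hspan (Function.update tstar j s)).det_pos
      rw [hdet s] at h1
      nlinarith
    set K : ℝ := ∑ i ∈ Finset.univ \ {j}, c i * tstar i with hK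
    have hsum : ∀ s, ∑ i, c i * Function.update tstar j s i = c j * s + K := by
      intro s
      have h : (fun i => c i * Function.update tstar j s i)
          = Function.update (fun i => c i * tstar i) j (c j * s) := by
        ext i
        by_cases h : i = j
        · subst h; simp
        · simp [Function.update_of_ne h]
      rw [h, Finset.sum_update_of_mem (Finset.mem_univ j)]
    have hloc : IsLocalMax
        (fun s => (c j * s + K) - (Real.log Q.det + Real.log (1 + (Real.exp s - E) * γ)))
        (tstar j) := by
      apply Filter.Eventually.of_forall
      intro s
      have h1 := hmax (Function.update tstar j s)
      show (c j * s + K) - (Real.log Q.det + Real.log (1 + (Real.exp s - E) * γ))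
        ≤ (c j * tstar j + K) -
            (Real.log Q.det + Real.log (1 + (Real.exp (tstar j) - E) * γ))
      calc (c j * s + K) - (Real.log Q.det + Real.log (1 + (Real.exp s - E) * γ))
          = (∑ i, c i * Function.update tstar j s i) -
              Real.log (∑ i, Real.exp ((Function.update tstar j s) i)
                • Matrix.vecMulVec (x i) (x i)).det := by
            rw [hsum s, hdet s, Real.log_mul hD.ne' (hpos s).ne']
        _ ≤ (∑ i, c i * tstar i) - Real.log Q.det := h1
        _ = (c j * tstar j + K) -
              (Real.log Q.det + Real.log (1 + (Real.exp (tstar j) - E) * γ)) := by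
            have h2 := hsum (tstar j)
            rw [Function.update_eq_self j tstar] at h2
            rw [h2, hE]
            simp
    -- derivative
    have h1 : HasDerivAt (fun s => 1 + (Real.exp s - E) * γ) (Real.exp (tstar j) * γ)
        (tstar j) :=
      (((Real.hasDerivAt_exp (tstar j)).sub_const E).mul_const γ).const_add 1
    have h2 : HasDerivAt (fun s => Real.log (1 + (Real.exp s - E) * γ))
        ((1 + (Real.exp (tstar j) - E) * γ)⁻¹ * (Real.exp (tstar j) * γ)) (tstar j) :=
      by have := (Real.hasDerivAt_log (hpos (tstar j)).ne').comp (tstar j) h1; exact this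
    have h3 : HasDerivAt (fun s => c j * s + K) (c j) (tstar j) := by
      simpa using ((hasDerivAt_id (tstar j)).const_mul (c j)).add_const K
    have h4 : HasDerivAt
        (fun s => (c j * s + K) - (Real.log Q.det + Real.log (1 + (Real.exp s - E) * γ)))
        (c j - (0 + (1 + (Real.exp (tstar j) - E) * γ)⁻¹ * (Real.exp (tstar j) * γ)))
        (tstar j) :=
      h3.sub ((hasDerivAt_const (tstar j) (Real.log Q.det)).add h2)
    have h5 := hloc.hasDerivAt_eq_zero h4
    rw [← hE] at h5
    simp at h5
    linarith [h5]
  -- Step C: final algebra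
  have hBs : Bᵀ = B := by
    have h := hB.1
    ext i j
    have h2 := congrFun (congrFun h i) j
    simpa [Matrix.conjTranspose_apply] using h2
  have hBinv : IsUnit B.det := hB.det_pos.ne'.isUnit
  have hr : ∀ i, B *ᵥ x i ⬝ᵥ B *ᵥ x i = x i ⬝ᵥ Q⁻¹ *ᵥ x i := by
    intro i
    rw [← hB2, ← Matrix.mulVec_mulVec]
    rw [dotProduct_mulVec (x i) B, ← Matrix.mulVec_transpose, hBs]
  have hγpos : ∀ i, 0 < x i ⬝ᵥ Q⁻¹ *ᵥ x i := by
    intro i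
    rw [← hr i]
    have hx : x i ≠ 0 := by
      intro h0
      have := hunit i
      rw [h0] at this
      simp at this
    have hBx : B *ᵥ x i ≠ 0 := by
      intro h0
      have := hB.dotProduct_mulVec_pos hx
      rw [h0] at this
      simp at this
    have hnn : 0 ≤ B *ᵥ x i ⬝ᵥ B *ᵥ x i :=
      Finset.sum_nonneg (fun k _ => mul_self_nonneg _)
    rcases hnn.lt_or_eq with h | h
    · exact h
    · exact absurd (dotProduct_self_eq_zero.mp h.symm) hBx
  -- rewrite each term
  have hterm : ∀ i, c i • Matrix.vecMulVec
      ((Real.sqrt (B.mulVec (x i) ⬝ᵥ B.mulVec (x i)))⁻¹ • B.mulVec (x i))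
      ((Real.sqrt (B.mulVec (x i) ⬝ᵥ B.mulVec (x i)))⁻¹ • B.mulVec (x i))
      = Real.exp (tstar i) • Matrix.vecMulVec (B *ᵥ x i) (B *ᵥ x i) := by
    intro i
    rw [aux_vecMulVec_smul, smul_smul]
    congr 1
    have hri : 0 < B *ᵥ x i ⬝ᵥ B *ᵥ x i := by rw [hr i]; exact hγpos i
    have hinv : (Real.sqrt (B *ᵥ x i ⬝ᵥ B *ᵥ x i))⁻¹ * (Real.sqrt (B *ᵥ x i ⬝ᵥ B *ᵥ x i))⁻¹
        = (B *ᵥ x i ⬝ᵥ B *ᵥ x i)⁻¹ := by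
      rw [← mul_inv, Real.mul_self_sqrt hri.le]
    rw [hinv, key i, ← hr i]
    field_simp
  calc ∑ i, c i • Matrix.vecMulVec
        ((Real.sqrt (B.mulVec (x i) ⬝ᵥ B.mulVec (x i)))⁻¹ • B.mulVec (x i))
        ((Real.sqrt (B.mulVec (x i) ⬝ᵥ B.mulVec (x i)))⁻¹ • B.mulVec (x i))
      = ∑ i, Real.exp (tstar i) • Matrix.vecMulVec (B *ᵥ x i) (B *ᵥ x i) :=
        Finset.sum_congr rfl (fun i _ => hterm i)
    _ = B * Q * Bᵀ := by
        rw [hQdef, Finset.mul_sum, Finset.sum_mul]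
        refine Finset.sum_congr rfl fun i _ => ?_
        rw [aux_vecMulVec_conj, Matrix.mul_smul, Matrix.smul_mul]
    _ = 1 := by
        rw [hBs]
        have h6 : B * (B * Q) = 1 := by
          rw [← Matrix.mul_assoc, hB2, Matrix.nonsing_inv_mul Q hQu]
        have h7 : B⁻¹ = B * Q := Matrix.inv_eq_right_inv h6
        rw [← h7, Matrix.nonsing_inv_mul B hBinv]
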